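/- Suppose a sequence (a_n) with values in {0,1} satisfies: for every k ∈ ℕ, a_{79·2^k + m} = 0 for all 0 ≤ m < 2^k, and a_{47·2^k + m} = 1 for all 0 ≤ m < 2^k. Then neither the limit lim_{N→∞} |{k < N : a_k = 0}|/N nor lim_{N→∞} |{k < N : a_k = 1}|/N exists. -/

import Mathlib

open Filter

private lemma count_run_eq (a : ℕ → ℕ) (v M d : ℕ) (h : ∀ m < d, a (M + m) = v) :
    ((Finset.range (M + d)).filter fun k => a k = v).card
      = ((Finset.range M).filter fun k => a k = v).card + d := by
  induction d with
  | zero => simp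
  | succ n ih =>
    have h' : ∀ m < n, a (M + m) = v := fun m hm => h m (hm.trans (Nat.lt_succ_self n))
    rw [← Nat.add_assoc, Finset.range_add_one, Finset.filter_insert,
      if_pos (h n (Nat.lt_succ_self n)), Finset.card_insert_of_notMem (by simp), ih h']
    omega

private lemma count_run_ne (a : ℕ → ℕ) (v w M d : ℕ) (hvw : w ≠ v)
    (h : ∀ m < d, a (M + m) = w) :
    ((Finset.range (M + d)).filter fun k => a k = v).card
      = ((Finset.range M).filter fun k => a k = v).card := by
  induction d with
  | zero => simp
  | succ n ih =>
    have h' : ∀ m < n, a (M + m) = w := fun m hm => h m (hm.trans (Nat.lt_succ_self n))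
    have hne : ¬ a (M + n) = v := by rw [h n (Nat.lt_succ_self n)]; exact hvw
    rw [← Nat.add_assoc, Finset.range_add_one, Finset.filter_insert, if_neg hne, ih h']

private lemma tendsto_mul_pow (q : ℕ) (hq : 0 < q) :
    Tendsto (fun k : ℕ => q * 2 ^ k) atTop atTop := by
  apply tendsto_atTop_mono (f := fun k : ℕ => k)
  · intro k
    calc k ≤ 2 ^ k := (Nat.lt_two_pow_self (n := k)).le
    _ ≤ q * 2 ^ k := Nat.le_mul_of_pos_left _ hq
  · exact tendsto_id

private lemma limit_one (c : ℕ → ℕ) (p : ℕ) (hp : 0 < p) (L : ℝ)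
    (hL : Tendsto (fun N : ℕ => (c N : ℝ) / N) atTop (nhds L))
    (hc : ∀ k : ℕ, c ((p + 1) * 2 ^ k) = c (p * 2 ^ k) + 2 ^ k) : L = 1 := by
  have h1 := hL.comp (tendsto_mul_pow p hp)
  have h2 := hL.comp (tendsto_mul_pow (p + 1) p.succ_pos)
  have hp' : (p : ℝ) ≠ 0 := Nat.cast_ne_zero.mpr hp.ne'
  have heq : ∀ k : ℕ,
      ((p : ℝ) * ((c (p * 2 ^ k) : ℝ) / ((p * 2 ^ k : ℕ) : ℝ)) + 1) / ((p : ℝ) + 1)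
        = (c ((p + 1) * 2 ^ k) : ℝ) / ((((p + 1) * 2 ^ k : ℕ)) : ℝ) := by
    intro k
    have h2k : (2 : ℝ) ^ k ≠ 0 := by positivity
    rw [hc k]
    push_cast
    field_simp
  have h3 : Tendsto (fun k : ℕ =>
      ((p : ℝ) * ((c (p * 2 ^ k) : ℝ) / ((p * 2 ^ k : ℕ) : ℝ)) + 1) / ((p : ℝ) + 1))
      atTop (nhds (((p : ℝ) * L + 1) / ((p : ℝ) + 1))) :=
    ((h1.const_mul _).add_const 1).div_const _
  have h4 : Tendsto (fun k : ℕ =>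
      ((p : ℝ) * ((c (p * 2 ^ k) : ℝ) / ((p * 2 ^ k : ℕ) : ℝ)) + 1) / ((p : ℝ) + 1))
      atTop (nhds L) := h2.congr fun k => (heq k).symm
  have key := tendsto_nhds_unique h3 h4
  have hp1 : (p : ℝ) + 1 ≠ 0 := by positivity
  field_simp at key
  linarith

private lemma limit_zero (c : ℕ → ℕ) (p : ℕ) (hp : 0 < p) (L : ℝ)
    (hL : Tendsto (fun N : ℕ => (c N : ℝ) / N) atTop (nhds L))
    (hc : ∀ k : ℕ, c ((p + 1) * 2 ^ k) = c (p * 2 ^ k)) : L = 0 := by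
  have h1 := hL.comp (tendsto_mul_pow p hp)
  have h2 := hL.comp (tendsto_mul_pow (p + 1) p.succ_pos)
  have hp' : (p : ℝ) ≠ 0 := Nat.cast_ne_zero.mpr hp.ne'
  have heq : ∀ k : ℕ,
      ((p : ℝ) * ((c (p * 2 ^ k) : ℝ) / ((p * 2 ^ k : ℕ) : ℝ))) / ((p : ℝ) + 1)
        = (c ((p + 1) * 2 ^ k) : ℝ) / ((((p + 1) * 2 ^ k : ℕ)) : ℝ) := by
    intro k
    have h2k : (2 : ℝ) ^ k ≠ 0 := by positivity
    rw [hc k]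
    push_cast
    field_simp
  have h3 : Tendsto (fun k : ℕ =>
      ((p : ℝ) * ((c (p * 2 ^ k) : ℝ) / ((p * 2 ^ k : ℕ) : ℝ))) / ((p : ℝ) + 1))
      atTop (nhds (((p : ℝ) * L) / ((p : ℝ) + 1))) :=
    (h1.const_mul _).div_const _
  have h4 : Tendsto (fun k : ℕ =>
      ((p : ℝ) * ((c (p * 2 ^ k) : ℝ) / ((p * 2 ^ k : ℕ) : ℝ))) / ((p : ℝ) + 1))
      atTop (nhds L) := h2.congr fun k => (heq k).symm
  have key := tendsto_nhds_unique h3 h4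
  have hp1 : (p : ℝ) + 1 ≠ 0 := by positivity
  field_simp at key
  linarith

theorem runs_imply_no_frequency
    (a : ℕ → ℕ) (hval : ∀ n, a n = 0 ∨ a n = 1)
    (hrun0 : ∀ k : ℕ, ∀ m < 2 ^ k, a (79 * 2 ^ k + m) = 0)
    (hrun1 : ∀ k : ℕ, ∀ m < 2 ^ k, a (47 * 2 ^ k + m) = 1) :
    (¬ ∃ L : ℝ, Filter.Tendsto
        (fun N : ℕ => (((Finset.range N).filter fun k => a k = 0).card : ℝ) / N)
        Filter.atTop (nhds L)) ∧
    (¬ ∃ L : ℝ, Filter.Tendsto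
        (fun N : ℕ => (((Finset.range N).filter fun k => a k = 1).card : ℝ) / N)
        Filter.atTop (nhds L)) := by
  constructor
  · rintro ⟨L, hL⟩
    have hone : L = 1 := by
      apply limit_one (fun N => ((Finset.range N).filter fun k => a k = 0).card) 79
        (by norm_num) L hL
      intro k
      have h80 : (79 + 1) * 2 ^ k = 79 * 2 ^ k + 2 ^ k := by ring
      rw [h80]
      exact count_run_eq a 0 (79 * 2 ^ k) (2 ^ k) (hrun0 k)
    have hzero : L = 0 := by
      apply limit_zero (fun N => ((Finset.range N).filter fun k => a k = 0).card) 47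
        (by norm_num) L hL
      intro k
      have h48 : (47 + 1) * 2 ^ k = 47 * 2 ^ k + 2 ^ k := by ring
      rw [h48]
      exact count_run_ne a 0 1 (47 * 2 ^ k) (2 ^ k) (by norm_num) (hrun1 k)
    simp [hone] at hzero
  · rintro ⟨L, hL⟩
    have hone : L = 1 := by
      apply limit_one (fun N => ((Finset.range N).filter fun k => a k = 1).card) 47
        (by norm_num) L hL
      intro k
      have h48 : (47 + 1) * 2 ^ k = 47 * 2 ^ k + 2 ^ k := by ring
      rw [h48]
      exact count_run_eq a 1 (47 * 2 ^ k) (2 ^ k) (hrun1 k)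
    have hzero : L = 0 := by
      apply limit_zero (fun N => ((Finset.range N).filter fun k => a k = 1).card) 79
        (by norm_num) L hL
      intro k
      have h80 : (79 + 1) * 2 ^ k = 79 * 2 ^ k + 2 ^ k := by ring
      rw [h80]
      exact count_run_ne a 1 0 (79 * 2 ^ k) (2 ^ k) (by norm_num) (hrun0 k)
    simp [hone] at hzero
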